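/- For real parameters h, u, w, σ, p̄, p_b, g, c with D := g·h + p̄ + c² ≥ 0, let A be the 6×6 real matrix with rows: row 1: (0, 1, 0, 0, 0, 0); row 2: (g·h − u², 2·u, 0, 0, 1, 0); row 3: (−u·w, w, u, 0, 0, 0); row 4: (−u·σ, σ, 0, u, 0, 0); row 5: (−u·(p̄ + c²), p̄ + c², 0, 0, u, 0); row 6: (−u·p_b, p_b, 0, 0, 0, u). Then a real number λ is an eigenvalue of A if and only if λ = u, λ = u + √D or λ = u − √D; in particular all eigenvalues of A are real. -/

import Mathlib

/-- The quasilinear system matrix `A(U) = ∂F/∂U + B(U)` of the hyperbolic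
reformulation of the Serre-Green-Naghdi system, in conserved variables. -/
def sgnMatrix (h u w sg pbar pb g c : ℝ) : Matrix (Fin 6) (Fin 6) ℝ :=
  !![0, 1, 0, 0, 0, 0;
     g * h - u ^ 2, 2 * u, 0, 0, 1, 0;
     -(u * w), w, u, 0, 0, 0;
     -(u * sg), sg, 0, u, 0, 0;
     -(u * (pbar + c ^ 2)), pbar + c ^ 2, 0, 0, u, 0;
     -(u * pb), pb, 0, 0, 0, u]

lemma eig_iff_det' {K : Type*} [Field K] {n : ℕ} (M : Matrix (Fin n) (Fin n) K) (μ : K) :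
    Module.End.HasEigenvalue (Matrix.toLin' M) μ ↔ (M - μ • 1).det = 0 := by
  rw [← Matrix.exists_mulVec_eq_zero_iff]
  constructor
  · intro hμ
    obtain ⟨v, hv⟩ := hμ.exists_hasEigenvector
    refine ⟨v, hv.2, ?_⟩
    have := hv.apply_eq_smul
    simp only [Matrix.toLin'_apply] at this
    simp [Matrix.sub_mulVec, this, Matrix.smul_mulVec, Matrix.one_mulVec]
  · rintro ⟨v, hv0, hv⟩
    apply Module.End.hasEigenvalue_of_hasEigenvector (x := v)
    refine ⟨Module.End.mem_eigenspace_iff.2 ?_, hv0⟩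
    simp only [Matrix.toLin'_apply]
    rw [Matrix.sub_mulVec, sub_eq_zero, Matrix.smul_mulVec, Matrix.one_mulVec] at hv
    exact hv

set_option maxRecDepth 10000 in
set_option maxHeartbeats 4000000 in
lemma sgn_det' {K : Type*} [Field K] (h u w sg pbar pb g c lam : K) :
    ((!![0, 1, 0, 0, 0, 0;
     g * h - u ^ 2, 2 * u, 0, 0, 1, 0;
     -(u * w), w, u, 0, 0, 0;
     -(u * sg), sg, 0, u, 0, 0;
     -(u * (pbar + c ^ 2)), pbar + c ^ 2, 0, 0, u, 0;
     -(u * pb), pb, 0, 0, 0, u] : Matrix (Fin 6) (Fin 6) K) - lam • 1).det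
    = (u - lam)^4 * ((lam - u)^2 - (g*h + pbar + c^2)) := by
  have E : ((!![0, 1, 0, 0, 0, 0;
     g * h - u ^ 2, 2 * u, 0, 0, 1, 0;
     -(u * w), w, u, 0, 0, 0;
     -(u * sg), sg, 0, u, 0, 0;
     -(u * (pbar + c ^ 2)), pbar + c ^ 2, 0, 0, u, 0;
     -(u * pb), pb, 0, 0, 0, u] : Matrix (Fin 6) (Fin 6) K) - lam • 1)
    = !![-lam, 1, 0, 0, 0, 0;
     g * h - u ^ 2, 2 * u - lam, 0, 0, 1, 0;
     -(u * w), w, u - lam, 0, 0, 0;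
     -(u * sg), sg, 0, u - lam, 0, 0;
     -(u * (pbar + c ^ 2)), pbar + c ^ 2, 0, 0, u - lam, 0;
     -(u * pb), pb, 0, 0, 0, u - lam] := by
    ext i j
    fin_cases i <;> fin_cases j <;>
      simp [Matrix.one_apply, Matrix.cons_val_succ,
        show (5 : Fin 6) = (4 : Fin 5).succ from rfl, Matrix.cons_val_four] <;>
      first | rfl | (intro hc; exact absurd hc (by decide))
  rw [E]
  simp [Matrix.det_succ_row_zero, Fin.sum_univ_succ, Fin.succAbove, Fin.castSucc, Fin.castAdd,
    Fin.castLE, Matrix.cons_val_succ]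
  ring

set_option maxRecDepth 10000 in
set_option maxHeartbeats 2000000 in
theorem stmt_9 (h u w sg pbar pb g c : ℝ) (hD : 0 ≤ g * h + pbar + c ^ 2) :
    (∀ lam : ℝ,
      Module.End.HasEigenvalue
          (Matrix.toLin' (sgnMatrix h u w sg pbar pb g c)) lam
        ↔ (lam = u ∨ lam = u + Real.sqrt (g * h + pbar + c ^ 2)
            ∨ lam = u - Real.sqrt (g * h + pbar + c ^ 2)))
    ∧ (∀ μ : ℂ,
        Module.End.HasEigenvalue
            (Matrix.toLin'
              ((sgnMatrix h u w sg pbar pb g c).map (algebraMap ℝ ℂ))) μ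
          → μ.im = 0) := by
  have hsq : Real.sqrt (g*h+pbar+c^2) ^ 2 = g*h+pbar+c^2 := Real.sq_sqrt hD
  constructor
  · intro lam
    rw [sgnMatrix, eig_iff_det', sgn_det', mul_eq_zero, pow_eq_zero_iff (by norm_num),
      sub_eq_zero]
    constructor
    · rintro (h1 | h2)
      · exact Or.inl h1.symm
      · have h2' : (lam - u)^2 - (g*h+pbar+c^2) = 0 := by linear_combination h2
        have hfac : (lam - u - Real.sqrt (g*h+pbar+c^2)) * (lam - u + Real.sqrt (g*h+pbar+c^2)) = 0 := by
          linear_combination h2' - hsq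
        rcases mul_eq_zero.1 hfac with h3 | h3
        · exact Or.inr (Or.inl (by linarith))
        · exact Or.inr (Or.inr (by linarith))
    · rintro (h1 | h2 | h3)
      · exact Or.inl h1.symm
      · refine Or.inr ?_
        rw [h2]; linear_combination hsq
      · refine Or.inr ?_
        rw [h3]; linear_combination hsq
  · intro μ hμ
    have Emap : (sgnMatrix h u w sg pbar pb g c).map (algebraMap ℝ ℂ)
        = !![0, 1, 0, 0, 0, 0;
     (g:ℂ) * h - (u:ℂ) ^ 2, 2 * u, 0, 0, 1, 0;
     -((u:ℂ) * w), w, u, 0, 0, 0;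
     -((u:ℂ) * sg), sg, 0, u, 0, 0;
     -((u:ℂ) * ((pbar:ℂ) + (c:ℂ) ^ 2)), (pbar:ℂ) + (c:ℂ) ^ 2, 0, 0, u, 0;
     -((u:ℂ) * pb), pb, 0, 0, 0, u] := by
      ext i j
      fin_cases i <;> fin_cases j <;>
        simp [sgnMatrix, Matrix.map_apply, Matrix.cons_val_succ, Matrix.vecHead, Matrix.vecTail,
          show (5 : Fin 6) = (4 : Fin 5).succ from rfl, Matrix.cons_val_four] <;>
        push_cast <;> ring
    rw [Emap, eig_iff_det', sgn_det'] at hμ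
    have hsqC : ((Real.sqrt (g*h+pbar+c^2) : ℂ)) ^ 2 = (g:ℂ)*h + pbar + c^2 := by
      have := congrArg (fun x : ℝ => (x : ℂ)) hsq
      push_cast at this
      simpa using this
    rcases mul_eq_zero.1 hμ with h1 | h2
    · have h1' : (u : ℂ) - μ = 0 := pow_eq_zero_iff (by norm_num) |>.1 h1
      have : μ = (u : ℂ) := by linear_combination -h1'
      simp [this]
    · have h2' : (μ - u) ^ 2 = (g:ℂ)*h + pbar + c^2 := by linear_combination h2
      have hfact : (μ - u - Real.sqrt (g*h+pbar+c^2)) * (μ - u + Real.sqrt (g*h+pbar+c^2)) = 0 := by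
        linear_combination h2' - hsqC
      rcases mul_eq_zero.1 hfact with h3 | h3
      · have : μ = (u : ℂ) + Real.sqrt (g*h+pbar+c^2) := by linear_combination h3
        rw [this]; simp
      · have : μ = (u : ℂ) - Real.sqrt (g*h+pbar+c^2) := by linear_combination h3
        rw [this]; simp
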